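/- Let n be even and let P be the union of the vertex set P₁ of a regular (n/2)-gon inscribed in a circle Q and a rotation P₂ of P₁ about the center of Q by an angle that is an irrational multiple of π. Then P is a set of n points in general position lying on Q that determines exactly 3n/2 distinct directions. -/

import Mathlib

open Real

noncomputable def uvec (s : ℝ) : ℝ × ℝ := (-Real.sin s, Real.cos s)

noncomputable def ept (c : ℝ × ℝ) (ρ a : ℝ) : ℝ × ℝ := c + ρ • (Real.cos a, Real.sin a)

noncomputable def dirS (s : ℝ) : Submodule ℝ (ℝ × ℝ) := Submodule.span ℝ {uvec s}

lemma uvec_ne_zero (s : ℝ) : uvec s ≠ 0 := by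
  intro h
  have h1 : -Real.sin s = 0 := congrArg Prod.fst h
  have h2 : Real.cos s = 0 := congrArg Prod.snd h
  have h3 := Real.sin_sq_add_cos_sq s
  rw [h2] at h3
  have : Real.sin s = 0 := by linarith
  rw [this] at h3; norm_num at h3

lemma chord (c : ℝ × ℝ) (ρ a b : ℝ) :
    ept c ρ b - ept c ρ a = (ρ * (2 * Real.sin ((b - a) / 2))) • uvec ((a + b) / 2) := by
  have hc := Real.cos_sub_cos b a
  have hs := Real.sin_sub_sin b a
  apply Prod.ext
  · simp only [ept, uvec, Prod.fst_sub, Prod.fst_add, Prod.smul_fst, smul_eq_mul]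
    ring_nf
    ring_nf at hc
    linear_combination ρ * hc
  · simp only [ept, uvec, Prod.snd_sub, Prod.snd_add, Prod.smul_snd, smul_eq_mul]
    ring_nf
    ring_nf at hs
    linear_combination ρ * hs

lemma dirS_eq_iff (s t : ℝ) : dirS s = dirS t ↔ ∃ k : ℤ, t - s = k * π := by
  constructor
  · intro h
    have hm : uvec t ∈ Submodule.span ℝ {uvec s} := by
      rw [show Submodule.span ℝ {uvec s} = dirS s from rfl, h]
      exact Submodule.mem_span_singleton_self _
    obtain ⟨r, hr⟩ := Submodule.mem_span_singleton.1 hm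
    have h1 : r * (-Real.sin s) = -Real.sin t := congrArg Prod.fst hr
    have h2 : r * Real.cos s = Real.cos t := congrArg Prod.snd hr
    have hz : Real.sin (t - s) = 0 := by
      rw [Real.sin_sub]; linear_combination Real.cos s * h1 + Real.sin s * h2
    obtain ⟨k, hk⟩ := Real.sin_eq_zero_iff.1 hz
    exact ⟨k, hk.symm⟩
  · rintro ⟨k, hk⟩
    have ht : t = s + k * π := by linarith
    have hu : uvec t = ((-1 : ℝ) ^ k) • uvec s := by
      rw [ht]
      apply Prod.ext
      · simp only [uvec, Prod.smul_fst, smul_eq_mul, Real.sin_add_int_mul_pi]; ring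
      · simp only [uvec, Prod.smul_snd, smul_eq_mul, Real.cos_add_int_mul_pi]
    rw [dirS, dirS, hu, Submodule.span_singleton_smul_eq]
    exact isUnit_iff_ne_zero.2 (zpow_ne_zero _ (by norm_num))

lemma ept_eq_iff {c : ℝ × ℝ} {ρ : ℝ} (hρ : ρ ≠ 0) (a b : ℝ) :
    ept c ρ a = ept c ρ b ↔ ∃ k : ℤ, b - a = k * (2 * π) := by
  rw [eq_comm, ← sub_eq_zero, chord c ρ a b, smul_eq_zero]
  constructor
  · rintro (h | h)
    · have hz : Real.sin ((b - a) / 2) = 0 := by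
        rcases mul_eq_zero.1 h with h' | h'
        · exact absurd h' hρ
        · linarith
      obtain ⟨k, hk⟩ := Real.sin_eq_zero_iff.1 hz
      exact ⟨k, by linarith⟩
    · exact absurd h (uvec_ne_zero _)
  · rintro ⟨k, hk⟩
    left
    have : (b - a) / 2 = k * π := by linarith
    rw [this, Real.sin_int_mul_pi]; ring

lemma span_chord {c : ℝ × ℝ} {ρ : ℝ} (hρ : ρ ≠ 0) {a b : ℝ}
    (h : ept c ρ a ≠ ept c ρ b) :
    Submodule.span ℝ {ept c ρ a - ept c ρ b} = dirS ((a + b) / 2) := by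
  have hc : ept c ρ a - ept c ρ b = (-(ρ * (2 * Real.sin ((b - a) / 2)))) • uvec ((a + b) / 2) := by
    rw [← neg_sub (ept c ρ b), chord c ρ a b, neg_smul]
  have hs : Real.sin ((b - a) / 2) ≠ 0 := by
    intro h0
    apply h
    have h1 := chord c ρ a b
    rw [h0] at h1
    simp at h1
    exact (sub_eq_zero.1 h1).symm
  rw [hc, dirS, Submodule.span_singleton_smul_eq]
  exact (isUnit_iff_ne_zero.2 (by simp [hρ, hs])).neg

lemma aux_int {k : ℤ} {m a b : ℕ} (ha : a < m) (hb : b < m)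
    (h : (a : ℤ) - (b : ℤ) = k * m) : a = b := by
  have hm : (0 : ℤ) < m := by omega
  have hlt : |(a : ℤ) - b| < m := abs_lt.2 ⟨by omega, by omega⟩
  rw [h, abs_mul, Int.abs_natCast] at hlt
  have h1 : |k| < 1 := (mul_lt_mul_iff_of_pos_right hm).1 (by simpa using hlt)
  have h2 := abs_lt.1 h1
  have hk : k = 0 := by omega
  rw [hk] at h
  simp at h
  omega

lemma irr_aux {γ : ℝ} (hγ : Irrational (γ / π)) (a b : ℤ) (hb : b ≠ 0) :
    (b : ℝ) * γ ≠ (a : ℝ) * π := by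
  intro h
  apply hγ
  refine ⟨(a : ℚ) / (b : ℚ), ?_⟩
  have hπ := Real.pi_ne_zero
  have hbR : (b : ℝ) ≠ 0 := Int.cast_ne_zero.2 hb
  push_cast
  field_simp
  linear_combination -h

lemma not_collinear_ept {c : ℝ × ℝ} {ρ : ℝ} {a b d : ℝ}
    (hab : ept c ρ a ≠ ept c ρ b) (had : ept c ρ a ≠ ept c ρ d)
    (hbd : ept c ρ b ≠ ept c ρ d) :
    ¬ Collinear ℝ ({ept c ρ a, ept c ρ b, ept c ρ d} : Set (ℝ × ℝ)) := by
  intro hcol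
  rw [collinear_iff_of_mem (Set.mem_insert _ _)] at hcol
  obtain ⟨v, hv⟩ := hcol
  obtain ⟨r1, hr1⟩ := hv (ept c ρ b) (by simp)
  obtain ⟨r2, hr2⟩ := hv (ept c ρ d) (by simp)
  have hA := chord c ρ a b
  have hB := chord c ρ a d
  set s1 := ρ * (2 * Real.sin ((b - a) / 2)) with hs1def
  set s2 := ρ * (2 * Real.sin ((d - a) / 2)) with hs2def
  have hA' : s1 • uvec ((a + b) / 2) = r1 • v := by
    rw [← hA, hr1]; simp
  have hB' : s2 • uvec ((a + d) / 2) = r2 • v := by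
    rw [← hB, hr2]; simp
  have h1 : s1 * (-Real.sin ((a + b) / 2)) = r1 * v.1 := by
    have := congrArg Prod.fst hA'; simpa [uvec] using this
  have h2 : s1 * Real.cos ((a + b) / 2) = r1 * v.2 := by
    have := congrArg Prod.snd hA'; simpa [uvec] using this
  have h3 : s2 * (-Real.sin ((a + d) / 2)) = r2 * v.1 := by
    have := congrArg Prod.fst hB'; simpa [uvec] using this
  have h4 : s2 * Real.cos ((a + d) / 2) = r2 * v.2 := by
    have := congrArg Prod.snd hB'; simpa [uvec] using this
  have key : s1 * s2 * Real.sin ((d - b) / 2) = 0 := by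
    have he : (d - b) / 2 = (a + d) / 2 - (a + b) / 2 := by ring
    rw [he, Real.sin_sub]
    linear_combination (s2 * Real.cos ((a + d) / 2)) * h1 + (-(r2 * v.1)) * h2 +
      (-(s1 * Real.cos ((a + b) / 2))) * h3 + (r1 * v.1) * h4
  have hs1 : s1 ≠ 0 := fun h0 => hab (by rw [h0, zero_smul] at hA; exact (sub_eq_zero.1 hA).symm)
  have hs2 : s2 ≠ 0 := fun h0 => had (by rw [h0, zero_smul] at hB; exact (sub_eq_zero.1 hB).symm)
  have hsin : Real.sin ((d - b) / 2) = 0 := by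
    rcases mul_eq_zero.1 key with h' | h'
    · rcases mul_eq_zero.1 h' with h'' | h''
      · exact absurd h'' hs1
      · exact absurd h'' hs2
    · exact h'
  apply hbd
  have hC := chord c ρ b d
  rw [hsin] at hC
  simp at hC
  exact (sub_eq_zero.1 hC).symm
noncomputable def Apt (m : ℕ) (θ γ : ℝ) (i : ℕ) : ℝ :=
  2 * π * (i % m : ℕ) / m + θ + ((i / m : ℕ) : ℝ) * γ

noncomputable def Bdir (m : ℕ) (θ γ : ℝ) (i : ℕ) : ℝ :=
  π * (i % m : ℕ) / m + θ + ((i / m : ℕ) : ℝ) * (γ / 2)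

lemma Bdir_apt (m : ℕ) (θ γ : ℝ) (i : ℕ) : Bdir m θ γ i = Apt m (2 * θ) γ i / 2 := by
  unfold Bdir Apt; ring

lemma Apt_eval {m : ℕ} (hm : 0 < m) (θ γ : ℝ) {j : ℕ} (hj : j < m) (ε : ℕ) :
    Apt m θ γ (j + ε * m) = 2 * π * j / m + θ + ε * γ := by
  unfold Apt
  rw [Nat.add_mul_mod_self_right, Nat.mod_eq_of_lt hj, Nat.add_mul_div_right _ _ hm,
    Nat.div_eq_of_lt hj]
  push_cast; ring

lemma Apt_eval0 {m : ℕ} (hm : 0 < m) (θ γ : ℝ) {j : ℕ} (hj : j < m) :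
    Apt m θ γ j = 2 * π * j / m + θ := by simpa using Apt_eval hm θ γ hj 0

lemma Apt_eval1 {m : ℕ} (hm : 0 < m) (θ γ : ℝ) {j : ℕ} (hj : j < m) :
    Apt m θ γ (j + m) = 2 * π * j / m + θ + γ := by simpa using Apt_eval hm θ γ hj 1

lemma Bdir_eval {m : ℕ} (hm : 0 < m) (θ γ : ℝ) {j : ℕ} (hj : j < m) (ε : ℕ) :
    Bdir m θ γ (j + ε * m) = π * j / m + θ + ε * (γ / 2) := by
  unfold Bdir
  rw [Nat.add_mul_mod_self_right, Nat.mod_eq_of_lt hj, Nat.add_mul_div_right _ _ hm,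
    Nat.div_eq_of_lt hj]
  push_cast; ring

lemma key_inj {m : ℕ} (hm : 0 < m) {γ θ : ℝ} (hγ : Irrational (γ / π)) {i j : ℕ} {k : ℤ}
    (h : Apt m θ γ j - Apt m θ γ i = k * (2 * π)) : i = j := by
  have hmR : (m : ℝ) ≠ 0 := Nat.cast_ne_zero.2 (by omega)
  have hπ := Real.pi_ne_zero
  have h2π : (2 * π : ℝ) ≠ 0 := by positivity
  unfold Apt at h
  have d1 := Nat.div_add_mod i m
  have d2 := Nat.div_add_mod j m
  have hi' := Nat.mod_lt i hm
  have hj' := Nat.mod_lt j hm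
  set im := i % m with him
  set di := i / m with hdi
  set jm := j % m with hjm
  set dj := j / m with hdj
  rcases eq_or_ne di dj with hd | hd
  · rw [← hd] at h d2
    have h5' : (2 * π) * ((jm : ℝ) - (im : ℝ)) = (2 * π) * ((k : ℝ) * m) := by
      field_simp at h
      linear_combination h
    have h5 := mul_left_cancel₀ h2π h5'
    have h6 : (jm : ℤ) - (im : ℤ) = k * m := by exact_mod_cast h5
    have h7 := aux_int hj' hi' h6
    rw [h7] at d2
    omega
  · exfalso
    have hd0 : ((dj : ℤ) - (di : ℤ)) ≠ 0 := fun h0 => hd (by omega)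
    refine irr_aux hγ (2 * k * m - 2 * (jm : ℤ) + 2 * (im : ℤ))
      (((dj : ℤ) - (di : ℤ)) * m)
      (mul_ne_zero hd0 (Int.natCast_ne_zero.2 (by omega))) ?_
    push_cast
    field_simp at h
    linear_combination h

/-- Let `n` be even and `P` the union of the vertex set `P₁` of a regular `(n/2)`-gon
inscribed in a circle and a rotation `P₂` of `P₁` about the center by an angle `γ` with
`γ/π` irrational. Then `P` consists of `n` points in general position and determines
exactly `3n/2` distinct directions. -/
theorem stmt_5 (n : ℕ) (hn : Even n) (h3 : 3 ≤ n / 2) (c : ℝ × ℝ) (ρ θ γ : ℝ)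
    (hρ : 0 < ρ) (hγ : Irrational (γ / π))
    (P₁ P₂ P : Set (ℝ × ℝ))
    (hP₁ : P₁ = (fun k : ℕ =>
      c + ρ • (Real.cos (2 * π * k / (n / 2) + θ),
               Real.sin (2 * π * k / (n / 2) + θ))) '' {k | k < n / 2})
    (hP₂ : P₂ = (fun k : ℕ =>
      c + ρ • (Real.cos (2 * π * k / (n / 2) + θ + γ),
               Real.sin (2 * π * k / (n / 2) + θ + γ))) '' {k | k < n / 2})
    (hP : P = P₁ ∪ P₂) :
    P.ncard = n ∧
    (∀ x ∈ P, ∀ y ∈ P, ∀ z ∈ P, x ≠ y → x ≠ z → y ≠ z →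
      ¬ Collinear ℝ ({x, y, z} : Set (ℝ × ℝ))) ∧
    Set.ncard {d : Submodule ℝ (ℝ × ℝ) |
      ∃ p ∈ P, ∃ q ∈ P, p ≠ q ∧ d = Submodule.span ℝ {p - q}} = 3 * n / 2 := by
  have hρ0 : ρ ≠ 0 := ne_of_gt hρ
  have hπ : π ≠ 0 := Real.pi_ne_zero
  obtain ⟨r, hr⟩ := hn
  set m : ℕ := n / 2 with hmdef
  have hm3 : 3 ≤ m := h3
  have hm0 : 0 < m := by omega
  have hn2 : n = 2 * m := by omega
  have hmR : (m : ℝ) ≠ 0 := Nat.cast_ne_zero.2 (by omega)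
  -- P as image
  have hnm : (n : ℝ) / 2 = (m : ℝ) := by rw [hn2]; push_cast; ring
  have hPE : P = (fun i => ept c ρ (Apt m θ γ i)) '' {i | i < 2 * m} := by
    rw [hP, hP₁, hP₂, hnm]
    ext p
    simp only [Set.mem_union, Set.mem_image, Set.mem_setOf_eq]
    constructor
    · rintro (⟨j, hj, rfl⟩ | ⟨j, hj, rfl⟩)
      · exact ⟨j, by omega, by rw [Apt_eval0 hm0 θ γ hj]; rfl⟩
      · exact ⟨j + m, by omega, by rw [Apt_eval1 hm0 θ γ hj]; rfl⟩
    · rintro ⟨i, hi, rfl⟩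
      rcases lt_or_ge i m with him | him
      · exact Or.inl ⟨i, him, by rw [Apt_eval0 hm0 θ γ him]; rfl⟩
      · refine Or.inr ⟨i - m, by omega, ?_⟩
        have hieq : i = (i - m) + m := by omega
        have hev := Apt_eval1 hm0 θ γ (show i - m < m by omega)
        rw [← hieq] at hev
        rw [hev]
        rfl
  have hInjE : Set.InjOn (fun i => ept c ρ (Apt m θ γ i)) {i | i < 2 * m} := by
    intro i hi j hj h
    obtain ⟨k, hk⟩ := (ept_eq_iff hρ0 _ _).1 h
    exact key_inj hm0 hγ hk
  have hInjF : Set.InjOn (fun i => dirS (Bdir m θ γ i)) {i | i < 3 * m} := by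
    intro i hi j hj h
    obtain ⟨k, hk⟩ := (dirS_eq_iff _ _).1 h
    refine key_inj hm0 hγ (θ := 2 * θ) (k := k) ?_
    rw [Bdir_apt, Bdir_apt] at hk
    linear_combination 2 * hk
  -- the helper producing pairs
  have mk : ∀ i j : ℕ, i < 2 * m → j < 2 * m → i ≠ j →
      ∃ p ∈ P, ∃ q ∈ P, p ≠ q ∧
        Submodule.span ℝ {p - q} = dirS ((Apt m θ γ i + Apt m θ γ j) / 2) := by
    intro i j hi hj hij
    have hne : ept c ρ (Apt m θ γ i) ≠ ept c ρ (Apt m θ γ j) :=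
      fun h0 => hij (hInjE hi hj h0)
    exact ⟨_, by rw [hPE]; exact ⟨i, hi, rfl⟩, _, by rw [hPE]; exact ⟨j, hj, rfl⟩, hne,
      span_chord hρ0 hne⟩
  -- direction set as image
  have hDF : {d : Submodule ℝ (ℝ × ℝ) | ∃ p ∈ P, ∃ q ∈ P, p ≠ q ∧ d = Submodule.span ℝ {p - q}}
      = (fun i => dirS (Bdir m θ γ i)) '' {i | i < 3 * m} := by
    ext d
    simp only [Set.mem_setOf_eq, Set.mem_image]
    constructor
    · rintro ⟨p, hp, q, hq, hpq, rfl⟩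
      rw [hPE] at hp hq
      obtain ⟨i, hi, rfl⟩ := hp
      obtain ⟨j, hj, rfl⟩ := hq
      beta_reduce
      have hi' : i < 2 * m := hi
      have hj' : j < 2 * m := hj
      have hdi : i / m < 2 := (Nat.div_lt_iff_lt_mul hm0).2 (by omega)
      have hdj : j / m < 2 := (Nat.div_lt_iff_lt_mul hm0).2 (by omega)
      have hpq' : ept c ρ (Apt m θ γ i) ≠ ept c ρ (Apt m θ γ j) := hpq
      unfold Apt at hpq' ⊢
      set a := i % m with ha
      set b := j % m with hb
      set u := i / m with hu
      set v := j / m with hv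
      have hdm := Nat.div_add_mod (a + b) m
      set q := (a + b) / m with hq
      set w := (a + b) % m with hw
      have hwm : w < m := Nat.mod_lt _ hm0
      clear_value a b u v q w
      have hbd : (u + v) * m ≤ 2 * m := Nat.mul_le_mul_right m (by omega)
      refine ⟨w + (u + v) * m, by omega, ?_⟩
      rw [Bdir_eval hm0 θ γ hwm, span_chord hρ0 hpq']
      rw [dirS_eq_iff]
      refine ⟨(q : ℤ), ?_⟩
      have hcast : (a : ℝ) + (b : ℝ) = (m : ℝ) * q + w := by exact_mod_cast hdm.symm
      have hw' : ((w : ℕ) : ℝ) = (a : ℝ) + b - m * q := by linarith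
      push_cast
      rw [hw']
      field_simp
      ring
    · rintro ⟨t, ht, rfl⟩
      have ht' : t < 3 * m := ht
      have hsm : t % m < m := Nat.mod_lt _ hm0
      have hteq : t = t % m + (t / m) * m := (Nat.mod_add_div' t m).symm
      have hε : t / m < 3 := (Nat.div_lt_iff_lt_mul hm0).2 (by omega)
      clear ht
      rw [hteq, Bdir_eval hm0 θ γ hsm]
      set s := t % m with hs
      set ε := t / m with hε'
      clear_value s ε
      interval_cases ε
      · rcases Nat.eq_zero_or_pos s with hs0 | hs0
        · obtain ⟨p, hp, q, hq, hne, heq⟩ := mk 1 (m - 1) (by omega) (by omega) (by omega)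
          refine ⟨p, hp, q, hq, hne, ?_⟩
          rw [heq, Apt_eval0 hm0 θ γ (by omega : 1 < m), Apt_eval0 hm0 θ γ (by omega : m - 1 < m)]
          rw [dirS_eq_iff]
          refine ⟨1, ?_⟩
          subst hs0
          have hc : ((m - 1 : ℕ) : ℝ) = (m : ℝ) - 1 := by
            push_cast [Nat.cast_sub (by omega : 1 ≤ m)]; ring
          rw [hc]
          push_cast
          field_simp
          ring
        · obtain ⟨p, hp, q, hq, hne, heq⟩ := mk 0 s (by omega) (by omega) (by omega)
          refine ⟨p, hp, q, hq, hne, ?_⟩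
          rw [heq, Apt_eval0 hm0 θ γ hm0, Apt_eval0 hm0 θ γ (by omega : s < m)]
          apply congrArg
          push_cast
          ring
      · obtain ⟨p, hp, q, hq, hne, heq⟩ := mk 0 (s + m) (by omega) (by omega) (by omega)
        refine ⟨p, hp, q, hq, hne, ?_⟩
        rw [heq, Apt_eval0 hm0 θ γ hm0, Apt_eval1 hm0 θ γ (by omega : s < m)]
        apply congrArg
        push_cast
        ring
      · rcases Nat.eq_zero_or_pos s with hs0 | hs0
        · obtain ⟨p, hp, q, hq, hne, heq⟩ := mk (1 + m) ((m - 1) + m) (by omega) (by omega)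
            (by omega)
          refine ⟨p, hp, q, hq, hne, ?_⟩
          rw [heq, Apt_eval1 hm0 θ γ (by omega : 1 < m), Apt_eval1 hm0 θ γ (by omega : m - 1 < m)]
          rw [dirS_eq_iff]
          refine ⟨1, ?_⟩
          subst hs0
          have hc : ((m - 1 : ℕ) : ℝ) = (m : ℝ) - 1 := by
            push_cast [Nat.cast_sub (by omega : 1 ≤ m)]; ring
          rw [hc]
          push_cast
          field_simp
          ring
        · obtain ⟨p, hp, q, hq, hne, heq⟩ := mk (0 + m) (s + m) (by omega) (by omega) (by omega)
          refine ⟨p, hp, q, hq, hne, ?_⟩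
          rw [heq, Apt_eval1 hm0 θ γ hm0, Apt_eval1 hm0 θ γ (by omega : s < m)]
          apply congrArg
          push_cast
          ring
  have hcard1 : P.ncard = n := by
    rw [hPE, Set.ncard_image_of_injOn hInjE]
    have : {i : ℕ | i < 2 * m} = ↑(Finset.range (2 * m)) := by ext i; simp
    rw [this, Set.ncard_coe_finset, Finset.card_range]
    omega
  refine ⟨hcard1, ?_, ?_⟩
  · intro x hx y hy z hz hxy hxz hyz
    rw [hPE] at hx hy hz
    obtain ⟨i, hi, rfl⟩ := hx
    obtain ⟨j, hj, rfl⟩ := hy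
    obtain ⟨l, hl, rfl⟩ := hz
    exact not_collinear_ept hxy hxz hyz
  · rw [hDF, Set.ncard_image_of_injOn hInjF]
    have : {i : ℕ | i < 3 * m} = ↑(Finset.range (3 * m)) := by ext i; simp
    rw [this, Set.ncard_coe_finset, Finset.card_range]
    omega
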